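/- Let n ≥ 1 and set ξ_0 = 1, ξ_{n+1} = −1, and ξ_k = cos((2k−1)π/(2n+1)) for 1 ≤ k ≤ n, so that 1 = ξ_0 > ξ_1 > ⋯ > ξ_n > ξ_{n+1} = −1. Then for each 1 ≤ k ≤ n the polynomial S_{2n} has exactly one zero in the open interval (ξ_{k+1}, ξ_k); these n zeroes together with x = 1 exhaust all the zeroes of S_{2n}, and all zeroes of S_{2n} are simple. -/

import Mathlib

open Polynomial Polynomial.Chebyshev Real

lemma U_eval_one (m : ℕ) : (U ℝ (m : ℤ)).eval 1 = m + 1 := by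
  induction m using Nat.twoStepInduction with
  | zero => simp [U_zero]
  | one => norm_num [U_one]
  | more m ih1 ih2 =>
    have h : ((m + 2 : ℕ) : ℤ) = (m : ℤ) + 2 := by push_cast; ring
    rw [h, U_add_two]
    have h1 : ((m + 1 : ℕ) : ℤ) = (m : ℤ) + 1 := by push_cast; ring
    rw [h1] at ih2
    simp only [eval_sub, eval_mul, eval_ofNat, eval_X, ih1, ih2]
    push_cast; ring

lemma U_eval_neg_one (m : ℕ) : (U ℝ (m : ℤ)).eval (-1) = (-1)^m * (m + 1) := by
  induction m using Nat.twoStepInduction with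
  | zero => simp [U_zero]
  | one => norm_num [U_one]
  | more m ih1 ih2 =>
    have h : ((m + 2 : ℕ) : ℤ) = (m : ℤ) + 2 := by push_cast; ring
    rw [h, U_add_two]
    have h1 : ((m + 1 : ℕ) : ℤ) = (m : ℤ) + 1 := by push_cast; ring
    rw [h1] at ih2
    simp only [eval_sub, eval_mul, eval_ofNat, eval_X, ih1, ih2]
    push_cast; ring

lemma U_natDeg (m : ℕ) : (U ℝ (m : ℤ)).natDegree ≤ m := by
  induction m using Nat.twoStepInduction with
  | zero => simp [U_zero]
  | one => 
    rw [show ((1:ℕ):ℤ) = 1 by norm_num, U_one]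
    refine (natDegree_mul_le).trans ?_
    simp [natDegree_X_le]
  | more m ih1 ih2 =>
    have h : ((m + 2 : ℕ) : ℤ) = (m : ℤ) + 2 := by push_cast; ring
    have h1 : ((m + 1 : ℕ) : ℤ) = (m : ℤ) + 1 := by push_cast; ring
    rw [h1] at ih2
    rw [h, U_add_two]
    refine (natDegree_sub_le _ _).trans ?_
    refine max_le ((natDegree_mul_le).trans ?_) (by omega)
    have : (2 * X : ℝ[X]).natDegree ≤ 1 := (natDegree_mul_le).trans (by simp)
    omega


/-- `S_{2n}(x) = (2nx + x + 2n − 1)Uₙ(x) − (2nx + 3x + 2n + 1)U_{n-1}(x)`. -/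
noncomputable def S2n (n : ℕ) : Polynomial ℝ :=
  (Polynomial.C (2 * (n : ℝ) + 1) * Polynomial.X + Polynomial.C (2 * (n : ℝ) - 1)) *
      U ℝ (n : ℤ) -
    (Polynomial.C (2 * (n : ℝ) + 3) * Polynomial.X + Polynomial.C (2 * (n : ℝ) + 1)) *
      U ℝ ((n : ℤ) - 1)

lemma S2n_natDegree_le (n : ℕ) (hn : 1 ≤ n) : (S2n n).natDegree ≤ n + 1 := by
  have hc : (n : ℤ) - 1 = ((n - 1 : ℕ) : ℤ) := by omega
  have hU1 : (U ℝ (n : ℤ)).natDegree ≤ n := U_natDeg n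
  have hU2 : (U ℝ ((n : ℤ) - 1)).natDegree ≤ n - 1 := by rw [hc]; exact U_natDeg (n - 1)
  have hlin : ∀ a b : ℝ, (Polynomial.C a * Polynomial.X + Polynomial.C b).natDegree ≤ 1 :=
    fun a b => natDegree_linear_le
  refine (natDegree_sub_le _ _).trans (max_le ?_ ?_)
  · exact (natDegree_mul_le).trans (by have := hlin (2*(n:ℝ)+1) (2*(n:ℝ)-1); omega)
  · exact (natDegree_mul_le).trans (by have := hlin (2*(n:ℝ)+3) (2*(n:ℝ)+1); omega)

lemma S2n_eval_one (n : ℕ) (hn : 1 ≤ n) : (S2n n).eval 1 = 0 := by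
  have hc : (n : ℤ) - 1 = ((n - 1 : ℕ) : ℤ) := by omega
  simp only [S2n, eval_sub, eval_mul, eval_add, eval_C, eval_X, hc, _root_.U_eval_one]
  push_cast [Nat.cast_sub hn]
  ring

lemma S2n_eval_neg_one (n : ℕ) (hn : 1 ≤ n) :
    (S2n n).eval (-1) = (-1)^(n+1) * (4 * n + 2) := by
  have hc : (n : ℤ) - 1 = ((n - 1 : ℕ) : ℤ) := by omega
  have hp : (-1 : ℝ)^(n-1) = (-1)^(n+1) := by
    rw [show n + 1 = (n - 1) + 2 by omega, pow_add]; norm_num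
  simp only [S2n, eval_sub, eval_mul, eval_add, eval_C, eval_X, hc, _root_.U_eval_neg_one]
  rw [hp]
  push_cast [Nat.cast_sub hn]
  ring

lemma S2n_sign (n k : ℕ) (hn : 1 ≤ n) (hk1 : 1 ≤ k) (hk2 : k ≤ n) :
    (S2n n).eval (Real.cos ((2 * k - 1) * π / (2 * n + 1))) *
      Real.sin ((2 * k - 1) * π / (2 * n + 1)) =
    (-1)^k * (4 * Real.cos (((2 * k - 1) * π / (2 * n + 1)) / 2) ^ 3) := by
  set θ : ℝ := (2 * k - 1) * π / (2 * n + 1) with hθ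
  have hden : (2 * (n:ℝ) + 1) ≠ 0 := by positivity
  have h1 : ((n:ℝ) + 1) * θ = (θ/2 - π/2) + k * π := by rw [hθ]; field_simp; ring
  have h2 : (n:ℝ) * θ = (-(θ/2) - π/2) + k * π := by rw [hθ]; field_simp; ring
  have e1 : Real.sin (((n:ℝ) + 1) * θ) = (-1)^(k+1) * Real.cos (θ/2) := by
    rw [h1, Real.sin_add_nat_mul_pi, Real.sin_sub_pi_div_two]; ring
  have e2 : Real.sin ((n:ℝ) * θ) = (-1)^(k+1) * Real.cos (θ/2) := by
    rw [h2, Real.sin_add_nat_mul_pi, show -(θ/2) - π/2 = -(θ/2 + π/2) by ring, Real.sin_neg,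
      Real.sin_add_pi_div_two]; ring
  have u1 := U_real_cos θ (n : ℤ)
  have u2 := U_real_cos θ ((n : ℤ) - 1)
  push_cast at u1 u2
  rw [show (n:ℝ) - 1 + 1 = (n:ℝ) by ring] at u2
  have hcosθ : Real.cos θ = 2 * Real.cos (θ/2)^2 - 1 := by
    have h := Real.cos_two_mul (θ/2)
    rw [show 2*(θ/2) = θ by ring] at h
    linarith
  calc (S2n n).eval (Real.cos θ) * Real.sin θ
      = (((2*n+1) * Real.cos θ + (2*n-1)) * ((U ℝ (n:ℤ)).eval (Real.cos θ) * Real.sin θ))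
        - (((2*n+3) * Real.cos θ + (2*n+1)) * ((U ℝ ((n:ℤ)-1)).eval (Real.cos θ) * Real.sin θ)) := by
        simp only [S2n, eval_sub, eval_mul, eval_add, eval_C, eval_X]; ring
    _ = (-1)^k * (4 * Real.cos (θ/2) ^ 3) := by
        rw [u1, u2, e1, e2, hcosθ]; ring

/-- For `n ≥ 1`, with `ξ₀ = 1`, `ξ_{n+1} = −1`, and
`ξ_k = cos((2k−1)π/(2n+1))` for `1 ≤ k ≤ n`, the `ξ_k` are strictly decreasing,
`S_{2n}` has exactly one zero in each interval `(ξ_{k+1}, ξ_k)` for `1 ≤ k ≤ n`;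
these zeroes together with `x = 1` exhaust the zeroes of `S_{2n}`, all of which
are simple. -/
theorem zeroes_of_S_even (n : ℕ) (hn : 1 ≤ n) (ξ : ℕ → ℝ)
    (hξ0 : ξ 0 = 1) (hξtop : ξ (n + 1) = -1)
    (hξ : ∀ k, 1 ≤ k → k ≤ n → ξ k = Real.cos ((2 * k - 1) * π / (2 * n + 1))) :
    (∀ k, k ≤ n → ξ (k + 1) < ξ k) ∧
    (∀ k, 1 ≤ k → k ≤ n →
      ∃! x, x ∈ Set.Ioo (ξ (k + 1)) (ξ k) ∧ (S2n n).eval x = 0) ∧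
    (∀ x : ℝ, (S2n n).eval x = 0 →
      x = 1 ∨ ∃ k, 1 ≤ k ∧ k ≤ n ∧ x ∈ Set.Ioo (ξ (k + 1)) (ξ k)) ∧
    (∀ x : ℝ, (S2n n).eval x = 0 →
      (Polynomial.derivative (S2n n)).eval x ≠ 0) := by
  classical
  have hπ := Real.pi_pos
  have hne : S2n n ≠ 0 := by
    intro h
    have := S2n_eval_neg_one n hn
    rw [h] at this
    simp only [eval_zero] at this
    have h2 : |(0:ℝ)| = |(-1:ℝ)^(n+1) * (4 * n + 2)| := by rw [this]
    rw [abs_mul, abs_pow, abs_neg, abs_one, one_pow, one_mul, abs_zero] at h2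
    have : (0:ℝ) < 4 * n + 2 := by positivity
    rw [abs_of_pos this] at h2
    linarith
  have hθpos : ∀ k : ℕ, 1 ≤ k → 0 < (2 * (k:ℝ) - 1) * π / (2 * (n:ℝ) + 1) := by
    intro k hk
    have h1 : (1:ℝ) ≤ (k:ℝ) := by exact_mod_cast hk
    apply div_pos (mul_pos (by linarith) hπ) (by positivity)
  have hθlt : ∀ k : ℕ, k ≤ n → (2 * (k:ℝ) - 1) * π / (2 * (n:ℝ) + 1) < π := by
    intro k hk
    have h1 : (k:ℝ) ≤ (n:ℝ) := by exact_mod_cast hk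
    rw [div_lt_iff₀ (by positivity)]
    nlinarith
  have hmono : ∀ k, k ≤ n → ξ (k + 1) < ξ k := by
    intro k hk
    rcases Nat.eq_zero_or_pos k with rfl | hk1
    · rw [hξ0, hξ 1 le_rfl hn]
      have h := Real.cos_lt_cos_of_nonneg_of_le_pi (le_refl (0:ℝ)) (hθlt 1 hn).le
        (hθpos 1 le_rfl)
      rwa [Real.cos_zero] at h
    · by_cases hkn : k = n
      · have htop : ξ (k+1) = -1 := by rw [show k+1 = n+1 by omega]; exact hξtop
        rw [htop, hξ k hk1 (le_of_eq hkn)]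
        have h := Real.cos_lt_cos_of_nonneg_of_le_pi (hθpos k hk1).le (le_refl π)
          (hθlt k (le_of_eq hkn))
        rwa [Real.cos_pi] at h
      · have hk2 : k + 1 ≤ n := by omega
        rw [hξ k hk1 (by omega), hξ (k+1) (by omega) hk2]
        apply Real.cos_lt_cos_of_nonneg_of_le_pi (hθpos k hk1).le (hθlt (k+1) hk2).le
        have hc : (0:ℝ) < 2 * (n:ℝ) + 1 := by positivity
        rw [div_lt_div_iff₀ hc hc]
        push_cast
        nlinarith
  have hanti : ∀ j k : ℕ, j ≤ k → k ≤ n + 1 → ξ k ≤ ξ j := by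
    intro j k hjk
    induction k, hjk using Nat.le_induction with
    | base => intro _; exact le_rfl
    | succ k hjk ih =>
      intro hk
      exact le_trans (hmono k (by omega)).le (ih (by omega))
  have hlt1 : ∀ k, 1 ≤ k → k ≤ n → ξ k < 1 := by
    intro k hk1 hk2
    have h1 := hanti 1 k hk1 (by omega)
    have h2 := hmono 0 (by omega)
    rw [hξ0] at h2
    linarith
  have hsign : ∀ k, 1 ≤ k → k ≤ n + 1 → 0 < (-1:ℝ)^k * (S2n n).eval (ξ k) := by
    intro k hk1 hk2
    by_cases hk : k ≤ n
    · have hs := S2n_sign n k hn hk1 hk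
      rw [← hξ k hk1 hk] at hs
      have hsin : 0 < Real.sin ((2 * (k:ℝ) - 1) * π / (2 * (n:ℝ) + 1)) :=
        Real.sin_pos_of_pos_of_lt_pi (hθpos k hk1) (hθlt k hk)
      have hcos : 0 < Real.cos (((2 * (k:ℝ) - 1) * π / (2 * (n:ℝ) + 1)) / 2) :=
        Real.cos_pos_of_mem_Ioo ⟨by linarith [hθpos k hk1], by linarith [hθlt k hk]⟩
      have h4 : 0 < 4 * Real.cos (((2 * (k:ℝ) - 1) * π / (2 * (n:ℝ) + 1)) / 2) ^ 3 := by
        positivity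
      have hA : (-1:ℝ)^k * (-1)^k = 1 := by
        rw [← pow_add]; exact Even.neg_one_pow ⟨k, rfl⟩
      have key : ((-1:ℝ)^k * (S2n n).eval (ξ k)) *
          Real.sin ((2 * (k:ℝ) - 1) * π / (2 * (n:ℝ) + 1)) =
          4 * Real.cos (((2 * (k:ℝ) - 1) * π / (2 * (n:ℝ) + 1)) / 2) ^ 3 := by
        calc ((-1:ℝ)^k * (S2n n).eval (ξ k)) *
            Real.sin ((2 * (k:ℝ) - 1) * π / (2 * (n:ℝ) + 1))
            = (-1:ℝ)^k * ((S2n n).eval (ξ k) *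
              Real.sin ((2 * (k:ℝ) - 1) * π / (2 * (n:ℝ) + 1))) := by ring
          _ = (-1:ℝ)^k * ((-1)^k *
              (4 * Real.cos (((2 * (k:ℝ) - 1) * π / (2 * (n:ℝ) + 1)) / 2) ^ 3)) := by rw [hs]
          _ = ((-1:ℝ)^k * (-1)^k) *
              (4 * Real.cos (((2 * (k:ℝ) - 1) * π / (2 * (n:ℝ) + 1)) / 2) ^ 3) := by ring
          _ = _ := by rw [hA, one_mul]
      have heq : (-1:ℝ)^k * (S2n n).eval (ξ k) =
          (4 * Real.cos (((2 * (k:ℝ) - 1) * π / (2 * (n:ℝ) + 1)) / 2) ^ 3) /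
            Real.sin ((2 * (k:ℝ) - 1) * π / (2 * (n:ℝ) + 1)) := by
        rw [eq_div_iff hsin.ne']; exact key
      rw [heq]
      exact div_pos h4 hsin
    · have hk' : k = n + 1 := by omega
      subst hk'
      rw [hξtop, S2n_eval_neg_one n hn]
      have hA : (-1:ℝ)^(n+1) * (-1)^(n+1) = 1 := by
        rw [← pow_add]; exact Even.neg_one_pow ⟨n+1, rfl⟩
      rw [← mul_assoc, hA, one_mul]
      positivity
  have hex : ∀ k, 1 ≤ k → k ≤ n →
      ∃ x ∈ Set.Ioo (ξ (k + 1)) (ξ k), (S2n n).eval x = 0 := by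
    intro k hk1 hk2
    have hab : ξ (k + 1) ≤ ξ k := (hmono k hk2).le
    have hcont : ContinuousOn (fun x => (S2n n).eval x) (Set.Icc (ξ (k+1)) (ξ k)) :=
      ((S2n n).continuous).continuousOn
    have h1 := hsign k hk1 (by omega)
    have h2 := hsign (k+1) (by omega) (by omega)
    rcases Nat.even_or_odd k with he | ho
    · rw [he.neg_one_pow, one_mul] at h1
      rw [(Even.add_one he).neg_one_pow] at h2
      have ha : (fun x => (S2n n).eval x) (ξ (k+1)) < 0 := by
        simp only []; linarith
      have hb : (0:ℝ) < (fun x => (S2n n).eval x) (ξ k) := by simp only []; linarith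
      obtain ⟨x, hx, hfx⟩ := intermediate_value_Ioo hab hcont (Set.mem_Ioo.mpr ⟨ha, hb⟩)
      exact ⟨x, hx, hfx⟩
    · rw [ho.neg_one_pow] at h1
      rw [(Odd.add_one ho).neg_one_pow, one_mul] at h2
      have ha : (0:ℝ) < (fun x => (S2n n).eval x) (ξ (k+1)) := by simp only []; linarith
      have hb : (fun x => (S2n n).eval x) (ξ k) < 0 := by simp only []; linarith
      obtain ⟨x, hx, hfx⟩ := intermediate_value_Ioo' hab hcont (Set.mem_Ioo.mpr ⟨hb, ha⟩)
      exact ⟨x, hx, hfx⟩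
  choose! r hr1 hr2 using hex
  have hsep : ∀ j k, 1 ≤ j → j < k → k ≤ n → r k < r j := by
    intro j k hj hjk hk
    have h1 := (hr1 k (by omega) hk).2
    have h2 := (hr1 j hj (by omega)).1
    have h3 := hanti (j+1) k (by omega) (by omega)
    linarith
  have hinj : Set.InjOn r (Finset.Icc 1 n) := by
    intro a ha b hb hab
    simp only [Finset.coe_Icc, Set.mem_Icc] at ha hb
    by_contra hne'
    rcases lt_or_gt_of_ne hne' with h | h
    · have := hsep a b ha.1 h hb.2; linarith
    · have := hsep b a hb.1 h ha.2; linarith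
  have h1not : (1:ℝ) ∉ (Finset.Icc 1 n).image r := by
    intro h
    obtain ⟨k, hk, hrk⟩ := Finset.mem_image.mp h
    simp only [Finset.mem_Icc] at hk
    have := (hr1 k hk.1 hk.2).2
    have := hlt1 k hk.1 hk.2
    linarith
  set F : Finset ℝ := insert (1:ℝ) ((Finset.Icc 1 n).image r) with hF
  have hroot1 : (S2n n).eval 1 = 0 := S2n_eval_one n hn
  have hsub : F ⊆ (S2n n).roots.toFinset := by
    intro x hx
    rw [Multiset.mem_toFinset, mem_roots']
    refine ⟨hne, ?_⟩
    rcases Finset.mem_insert.mp hx with rfl | hx'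
    · exact hroot1
    · obtain ⟨k, hk, rfl⟩ := Finset.mem_image.mp hx'
      simp only [Finset.mem_Icc] at hk
      exact hr2 k hk.1 hk.2
  have hcF : F.card = n + 1 := by
    rw [hF, Finset.card_insert_of_notMem h1not, Finset.card_image_of_injOn hinj,
      Nat.card_Icc]
    omega
  have hroots_card : Multiset.card (S2n n).roots ≤ n + 1 :=
    le_trans (card_roots' _) (S2n_natDegree_le n hn)
  have htf_le : (S2n n).roots.toFinset.card ≤ Multiset.card (S2n n).roots :=
    Multiset.toFinset_card_le _
  have hge : n + 1 ≤ (S2n n).roots.toFinset.card := by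
    rw [← hcF]; exact Finset.card_le_card hsub
  have hFeq : F = (S2n n).roots.toFinset :=
    Finset.eq_of_subset_of_card_le hsub (by omega)
  have hmemF : ∀ x : ℝ, (S2n n).eval x = 0 → x ∈ F := by
    intro x hx
    rw [hFeq, Multiset.mem_toFinset, mem_roots']
    exact ⟨hne, hx⟩
  have hcount1 : ∀ x : ℝ, (S2n n).eval x = 0 → (S2n n).roots.count x = 1 := by
    intro x hx
    have hxm : x ∈ (S2n n).roots := by rw [mem_roots']; exact ⟨hne, hx⟩
    by_contra hc
    have hge2 : 2 ≤ (S2n n).roots.count x := by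
      have := Multiset.count_pos.mpr hxm; omega
    have hsum := Multiset.toFinset_sum_count_eq (S2n n).roots
    have hlt : (S2n n).roots.toFinset.card <
        ∑ a ∈ (S2n n).roots.toFinset, (S2n n).roots.count a := by
      rw [Finset.card_eq_sum_ones]
      refine Finset.sum_lt_sum (fun i hi => ?_) ⟨x, Multiset.mem_toFinset.mpr hxm, by omega⟩
      exact Multiset.count_pos.mpr (Multiset.mem_toFinset.mp hi)
    omega
  refine ⟨hmono, ?_, ?_, ?_⟩
  · intro k hk1 hk2
    refine ⟨r k, ⟨hr1 k hk1 hk2, hr2 k hk1 hk2⟩, ?_⟩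
    rintro y ⟨hy, hy0⟩
    have hyF := hmemF y hy0
    rcases Finset.mem_insert.mp hyF with rfl | hy'
    · exfalso
      have := hlt1 k hk1 hk2
      have := hy.2
      linarith
    · obtain ⟨j, hj, rfl⟩ := Finset.mem_image.mp hy'
      simp only [Finset.mem_Icc] at hj
      by_cases hjk : j = k
      · rw [hjk]
      · exfalso
        rcases lt_or_gt_of_ne hjk with h | h
        · have h1 := (hr1 j hj.1 (by omega)).1
          have h2 := hanti (j+1) k (by omega) (by omega)
          have := hy.2
          linarith
        · have h1 := (hr1 j hj.1 hj.2).2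
          have h2 := hanti (k+1) j (by omega) (by omega)
          have := hy.1
          linarith
  · intro x hx
    rcases Finset.mem_insert.mp (hmemF x hx) with rfl | hx'
    · exact Or.inl rfl
    · obtain ⟨k, hk, rfl⟩ := Finset.mem_image.mp hx'
      simp only [Finset.mem_Icc] at hk
      exact Or.inr ⟨k, hk.1, hk.2, hr1 k hk.1 hk.2⟩
  · intro x hx hdx
    have hgt := (one_lt_rootMultiplicity_iff_isRoot hne).mpr ⟨hx, hdx⟩
    rw [← count_roots] at hgt
    have := hcount1 x hx
    omega
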